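/- Let M be a positive normal affine monoid of rank r (a finitely generated submonoid of ℤ^r with trivial unit group, normal, and gp(M) = ℤ^r). Then there exists a free basis {x₁,…,x_r} of ℤ^r such that the real cone ℝ₊M spanned by M in ℝ^r is contained in the simplicial cone ℝ₊x₁ + ⋯ + ℝ₊x_r. -/

import Mathlib

open scoped NNReal
noncomputable section

/-- Real image of an integer vector. -/
def toR {r : ℕ} (v : Fin r → ℤ) : Fin r → ℝ := fun i => (v i : ℝ)

/-- The group of differences of a submonoid of an abelian group. -/
def gp {G : Type*} [AddCommGroup G] (M : AddSubmonoid G) : AddSubgroup G :=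
  AddSubgroup.closure (M : Set G)

/-- `M` is normal: `c • x ∈ M` for `x ∈ gp M`, `c ≥ 1` implies `x ∈ M`. -/
def IsNormalMonoid {G : Type*} [AddCommGroup G] (M : AddSubmonoid G) : Prop :=
  ∀ (c : ℕ) (x : G), 0 < c → x ∈ gp M → (c : ℤ) • x ∈ M → x ∈ M

/-- `M` is positive: no nontrivial units. -/
def IsPositiveMonoid {G : Type*} [AddCommGroup G] (M : AddSubmonoid G) : Prop :=
  ∀ x ∈ M, -x ∈ M → x = 0

/-- The cone `ℝ₊M ⊆ ℝ^r` spanned by a submonoid `M ⊆ ℤ^r`. -/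
def coneM {r : ℕ} (M : AddSubmonoid (Fin r → ℤ)) : Set (Fin r → ℝ) :=
  (Submodule.span ℝ≥0 (toR '' (M : Set (Fin r → ℤ))) : Submodule ℝ≥0 (Fin r → ℝ))

/-- The distinguished vector `e = (1,0) ∈ ℤ ⊕ ℤ^r`. -/
def eVec (r : ℕ) : ℤ × (Fin r → ℤ) := (1, 0)

/-- `M_i = (ℝ ⊕ ℝ₊M) ∩ (ℤ(x₁ - ie) + ⋯ + ℤ(x_r - ie))`, with `x_j - ie = (-i, x_j)`. -/
def Mi {r : ℕ} (M : AddSubmonoid (Fin r → ℤ)) (x : Fin r → (Fin r → ℤ)) (i : ℕ) :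
    Set (ℤ × (Fin r → ℤ)) :=
  {p | p ∈ AddSubgroup.closure (Set.range fun j => ((-(i : ℤ), x j) : ℤ × (Fin r → ℤ))) ∧
       toR p.2 ∈ coneM M}

/-- The submonoid (as a set) `ℤ₊e + M_i`. -/
def ZeMi {r : ℕ} (M : AddSubmonoid (Fin r → ℤ)) (x : Fin r → (Fin r → ℤ)) (i : ℕ) :
    Set (ℤ × (Fin r → ℤ)) :=
  {p | ∃ (z : ℕ) (m : ℤ × (Fin r → ℤ)), m ∈ Mi M x i ∧ p = (z : ℤ) • eVec r + m}
section Aux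

open Module

lemma toR_injective {r : ℕ} : Function.Injective (toR (r := r)) := by
  intro a b h
  funext i
  have := congrFun h i
  simpa [toR] using this

lemma rat_mul_den (q : ℚ) : q * (q.den : ℚ) = (q.num : ℚ) := by
  have h : (q.den : ℚ) ≠ 0 := by exact_mod_cast q.den_ne_zero
  rw [eq_comm, ← div_eq_iff h, eq_comm]
  exact (Rat.num_div_den q).symm

lemma exists_int_eq_mul (q : ℚ) {D : ℕ} (h : q.den ∣ D) :
    ∃ z : ℤ, (z : ℚ) = q * (D : ℚ) := by
  obtain ⟨c, hc⟩ := h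
  refine ⟨q.num * c, ?_⟩
  rw [hc]
  push_cast
  rw [← mul_assoc, rat_mul_den]

lemma exists_nat_eq_mul (q : ℚ) (hq : 0 ≤ q) {D : ℕ} (hD : 0 < D) (h : q.den ∣ D) :
    ∃ n : ℕ, (n : ℚ) = q * (D : ℚ) := by
  obtain ⟨z, hz⟩ := exists_int_eq_mul q h
  have hz0 : (0 : ℚ) ≤ (z : ℚ) := by
    rw [hz]; positivity
  refine ⟨z.toNat, ?_⟩
  rw [← hz]
  norm_cast
  exact Int.toNat_of_nonneg (by exact_mod_cast hz0)

/-- A rational vector lying in the real span of (the real images of) a set of rational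
vectors already lies in the rational span. -/
lemma rat_mem_span_of_real {ι : Type*} [Fintype ι] [DecidableEq ι] (A : Set (ι → ℚ)) (x : ι → ℚ)
    (h : (fun i => ((x i : ℚ) : ℝ)) ∈
      Submodule.span ℝ ((fun v : ι → ℚ => fun i => ((v i : ℚ) : ℝ)) '' A)) :
    x ∈ Submodule.span ℚ A := by
  by_contra hx
  obtain ⟨g, hgx, hgbot⟩ := Submodule.exists_dual_map_eq_bot_of_notMem
    (p := Submodule.span ℚ A) hx inferInstance
  set c : ι → ℝ := fun i => ((g fun j => if i = j then (1:ℚ) else 0 : ℚ) : ℝ) with hc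
  let G : (ι → ℝ) →ₗ[ℝ] ℝ := ∑ i, c i • (LinearMap.proj i : (ι → ℝ) →ₗ[ℝ] ℝ)
  have hGapp : ∀ y : ι → ℝ, G y = ∑ i, c i * y i := by
    intro y
    simp [G, LinearMap.sum_apply, LinearMap.smul_apply]
  have key : ∀ v : ι → ℚ, G (fun i => ((v i : ℚ) : ℝ)) = ((g v : ℚ) : ℝ) := by
    intro v
    rw [hGapp]
    have hv : g v = ∑ i, v i * g (fun j => if i = j then (1:ℚ) else 0) := by
      conv_lhs => rw [pi_eq_sum_univ v]
      rw [map_sum]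
      congr 1
      funext i
      rw [map_smul, smul_eq_mul]
    rw [hv]
    push_cast
    congr 1
    funext i
    rw [hc]
    ring
  have hker : Submodule.span ℝ ((fun v : ι → ℚ => fun i => ((v i : ℚ) : ℝ)) '' A) ≤
      LinearMap.ker G := by
    rw [Submodule.span_le]
    rintro _ ⟨v, hvA, rfl⟩
    have hgv : g v = 0 := by
      have hmem : g v ∈ Submodule.map g (Submodule.span ℚ A) :=
        ⟨v, Submodule.subset_span hvA, rfl⟩
      rw [hgbot] at hmem
      simpa using hmem
    simp [LinearMap.mem_ker, key v, hgv]
  have h0 : G (fun i => ((x i : ℚ) : ℝ)) = 0 := hker h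
  rw [key x] at h0
  exact hgx (by exact_mod_cast h0)

/-- Gordan-type statement: if a finite set of integer vectors admits no nontrivial
nonnegative integral relation, then there is an integral linear functional positive on
all its nonzero members. -/
lemma exists_pos_functional {r : ℕ} (S : Finset (Fin r → ℤ))
    (hrel : ∀ n : (Fin r → ℤ) → ℕ, ∑ v ∈ S, n v • v = 0 → ∀ v ∈ S, n v ≠ 0 → v = 0) :
    ∃ φ : Fin r → ℤ, ∀ v ∈ S, v ≠ 0 → 0 < ∑ i, φ i * v i := by
  classical
  set T : Finset (Fin r → ℤ) := S.filter (fun v => v ≠ 0) with hT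
  -- Step 1 : `0` is not in the convex hull of the (real images of the) nonzero generators.
  have h0 : (0 : Fin r → ℝ) ∉ convexHull ℝ (toR '' (T : Set (Fin r → ℤ))) := by
    intro hmem
    obtain ⟨ι, hι, z, w, hzT, hai, hwpos, hwsum, hwz⟩ :=
      eq_pos_convex_span_of_mem_convexHull hmem
    have hz : ∀ i : ι, ∃ v, v ∈ T ∧ toR v = z i := by
      intro i
      obtain ⟨v, hv, hveq⟩ := hzT (Set.mem_range_self i)
      exact ⟨v, hv, hveq⟩
    choose vz hvzT hvzR using hz
    have hvzS : ∀ i, vz i ∈ S := fun i => (Finset.mem_filter.mp (hvzT i)).1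
    have hvznz : ∀ i, vz i ≠ 0 := fun i => (Finset.mem_filter.mp (hvzT i)).2
    have hzj : ∀ i j, z i j = ((vz i j : ℤ) : ℝ) := by
      intro i j
      rw [← hvzR i]; rfl
    -- encode vectors together with the affine coordinate `1`
    set F : ι → (Option (Fin r) → ℚ) :=
      fun i o => o.elim 1 (fun j => ((vz i j : ℤ) : ℚ)) with hF
    set x : Option (Fin r) → ℚ := fun o => o.elim 1 (fun _ => 0) with hx
    have hreal : (fun o => ((x o : ℚ) : ℝ)) ∈
        Submodule.span ℝ ((fun v : Option (Fin r) → ℚ => fun o => ((v o : ℚ) : ℝ)) ''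
          Set.range F) := by
      rw [← Set.range_comp, Submodule.mem_span_range_iff_exists_fun]
      refine ⟨w, ?_⟩
      funext o
      rw [Finset.sum_apply]
      cases o with
      | none => simpa [hF, hx] using hwsum
      | some j =>
        have := congrFun hwz j
        rw [Finset.sum_apply] at this
        simpa [hF, hx, hzj] using this
    have hratx : x ∈ Submodule.span ℚ (Set.range F) :=
      rat_mem_span_of_real (Set.range F) x hreal
    rw [Submodule.mem_span_range_iff_exists_fun] at hratx
    obtain ⟨μ, hμ⟩ := hratx
    have hμ1 : ∑ i, μ i = 1 := by
      have := congrFun hμ none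
      rw [Finset.sum_apply] at this
      simpa [hF, hx] using this
    have hμ0 : ∀ j, ∑ i, μ i * ((vz i j : ℤ) : ℚ) = 0 := by
      intro j
      have := congrFun hμ (some j)
      rw [Finset.sum_apply] at this
      simpa [hF, hx] using this
    -- by affine independence, the rational weights agree with `w`, hence are positive
    have huniq : ∀ i, w i = ((μ i : ℚ) : ℝ) := by
      have key := affineIndependent_iff.mp hai Finset.univ
        (fun i => w i - ((μ i : ℚ) : ℝ)) ?_ ?_
      · intro i
        have := key i (Finset.mem_univ i)
        linarith [this]
      · have hμ1' : ∑ i, ((μ i : ℚ) : ℝ) = 1 := by exact_mod_cast congrArg (fun q : ℚ => (q : ℝ)) hμ1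
        rw [Finset.sum_sub_distrib, hwsum, hμ1', sub_self]
      · have hz0 : ∑ i, ((μ i : ℚ) : ℝ) • z i = 0 := by
          funext j
          rw [Finset.sum_apply]
          have := hμ0 j
          have : ((∑ i, μ i * ((vz i j : ℤ) : ℚ) : ℚ) : ℝ) = 0 := by rw [this]; norm_num
          push_cast at this
          simpa [hzj] using this
        simp only [sub_smul, Finset.sum_sub_distrib, hwz, hz0, sub_self]
    have hμpos : ∀ i, 0 < μ i := by
      intro i
      have := hwpos i
      rw [huniq i] at this
      exact_mod_cast this
    -- clear denominators to get a nonnegative integral relation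
    set D : ℕ := ∏ i, (μ i).den with hD
    have hDpos : 0 < D := Finset.prod_pos (fun i _ => (μ i).pos)
    have hden : ∀ i, (μ i).den ∣ D := fun i => Finset.dvd_prod_of_mem _ (Finset.mem_univ i)
    have hk : ∀ i : ι, ∃ n : ℕ, (n : ℚ) = μ i * (D : ℚ) :=
      fun i => exists_nat_eq_mul (μ i) (le_of_lt (hμpos i)) hDpos (hden i)
    choose k hkval using hk
    have hkpos : ∀ i, 0 < k i := by
      intro i
      have : (0 : ℚ) < (k i : ℚ) := by
        rw [hkval i]
        have : (0 : ℚ) < (D : ℚ) := by exact_mod_cast hDpos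
        exact mul_pos (hμpos i) this
      exact_mod_cast this
    set n : (Fin r → ℤ) → ℕ := fun v => ∑ i, if vz i = v then k i else 0 with hn
    have hstep : ∑ v ∈ S, n v • v = ∑ i, k i • vz i := by
      have h1 : ∑ v ∈ S, n v • v = ∑ v ∈ S, ∑ i, (if vz i = v then k i • v else 0) := by
        refine Finset.sum_congr rfl (fun v hv => ?_)
        rw [hn, Finset.sum_smul]
        refine Finset.sum_congr rfl (fun i _ => ?_)
        split <;> simp
      rw [h1, Finset.sum_comm]
      refine Finset.sum_congr rfl (fun i _ => ?_)
      rw [Finset.sum_ite_eq S (vz i) (fun v => k i • v), if_pos (hvzS i)]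
    have hsum : ∑ v ∈ S, n v • v = 0 := by
      rw [hstep]
      funext j
      rw [Finset.sum_apply, Pi.zero_apply]
      have hcast : ((∑ i, (k i • vz i) j : ℤ) : ℚ) = 0 := by
        simp only [Pi.smul_apply, smul_eq_mul, nsmul_eq_mul]
        push_cast
        calc ∑ i, (k i : ℚ) * ((vz i j : ℤ) : ℚ)
            = (D : ℚ) * ∑ i, μ i * ((vz i j : ℤ) : ℚ) := by
              rw [Finset.mul_sum]
              refine Finset.sum_congr rfl (fun i _ => ?_)
              rw [hkval i]; ring
          _ = 0 := by rw [hμ0 j, mul_zero]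
      exact_mod_cast hcast
    have hne : Nonempty ι := by
      by_contra hempty
      rw [not_nonempty_iff] at hempty
      rw [Finset.univ_eq_empty, Finset.sum_empty] at hμ1
      exact one_ne_zero hμ1.symm
    obtain ⟨i₀⟩ := hne
    have hnv : n (vz i₀) ≠ 0 := by
      intro hzero
      rw [hn] at hzero
      have h := (Finset.sum_eq_zero_iff.mp hzero) i₀ (Finset.mem_univ i₀)
      rw [if_pos rfl] at h
      exact (hkpos i₀).ne' h
    exact hvznz i₀ (hrel n hsum (vz i₀) (hvzS i₀) hnv)
  -- Step 2 : separate `0` from the hull and rationalize the functional.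
  have hclosed : IsClosed (convexHull ℝ (toR '' (T : Set (Fin r → ℤ)))) :=
    Set.Finite.isClosed_convexHull ℝ (T.finite_toSet.image _)
  have hconv : Convex ℝ (convexHull ℝ (toR '' (T : Set (Fin r → ℤ)))) :=
    convex_convexHull ℝ _
  obtain ⟨f, u, hfu, hub⟩ := geometric_hahn_banach_point_closed hconv hclosed h0
  have hu : 0 < u := by simpa using hfu
  have hfv : ∀ v ∈ T, u < f (toR v) := fun v hv =>
    hub _ (subset_convexHull ℝ _ (Set.mem_image_of_mem _ hv))
  set c : Fin r → ℝ := fun i => f (fun j => if i = j then (1 : ℝ) else 0) with hcdef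
  have hf : ∀ y : Fin r → ℝ, f y = ∑ i, y i * c i := by
    intro y
    conv_lhs => rw [pi_eq_sum_univ y]
    rw [map_sum]
    refine Finset.sum_congr rfl (fun i _ => ?_)
    rw [map_smul, smul_eq_mul, hcdef]
  set B : ℝ := 1 + ∑ v ∈ T, ∑ i, |((v i : ℤ) : ℝ)| with hBdef
  have hB : 0 < B := by
    have : (0:ℝ) ≤ ∑ v ∈ T, ∑ i, |((v i : ℤ) : ℝ)| :=
      Finset.sum_nonneg (fun v _ => Finset.sum_nonneg (fun i _ => abs_nonneg _))
    linarith
  have hBv : ∀ v ∈ T, ∑ i, |((v i : ℤ) : ℝ)| ≤ B - 1 := by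
    intro v hv
    have := Finset.single_le_sum
      (f := fun v : Fin r → ℤ => ∑ i, |((v i : ℤ) : ℝ)|)
      (fun w _ => Finset.sum_nonneg (fun i _ => abs_nonneg _)) hv
    rw [hBdef]; linarith
  set ε : ℝ := u / B with hε
  have hεpos : 0 < ε := div_pos hu hB
  have hq : ∀ i : Fin r, ∃ q : ℚ, |c i - (q : ℝ)| < ε := fun i => exists_rat_near (c i) hεpos
  choose q hqnear using hq
  have hqv : ∀ v ∈ T, 0 < ∑ i, ((v i : ℤ) : ℚ) * q i := by
    intro v hv
    have hreal : (0:ℝ) < ∑ i, ((v i : ℤ) : ℝ) * ((q i : ℚ) : ℝ) := by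
      have hsplit : ∑ i, ((v i : ℤ) : ℝ) * ((q i : ℚ) : ℝ)
          = f (toR v) + ∑ i, ((v i : ℤ) : ℝ) * (((q i : ℚ) : ℝ) - c i) := by
        rw [hf (toR v), ← Finset.sum_add_distrib]
        refine Finset.sum_congr rfl (fun i _ => ?_)
        show ((v i : ℤ) : ℝ) * ((q i : ℚ) : ℝ) = toR v i * c i + ((v i : ℤ) : ℝ) * _
        show ((v i : ℤ) : ℝ) * ((q i : ℚ) : ℝ)
          = ((v i : ℤ) : ℝ) * c i + ((v i : ℤ) : ℝ) * (((q i : ℚ) : ℝ) - c i)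
        ring
      have hest : |∑ i, ((v i : ℤ) : ℝ) * (((q i : ℚ) : ℝ) - c i)| ≤ (B - 1) * ε := by
        calc |∑ i, ((v i : ℤ) : ℝ) * (((q i : ℚ) : ℝ) - c i)|
            ≤ ∑ i, |((v i : ℤ) : ℝ) * (((q i : ℚ) : ℝ) - c i)| :=
              Finset.abs_sum_le_sum_abs _ _
          _ ≤ ∑ i, |((v i : ℤ) : ℝ)| * ε := by
              refine Finset.sum_le_sum (fun i _ => ?_)
              rw [abs_mul]
              refine mul_le_mul_of_nonneg_left ?_ (abs_nonneg _)
              rw [abs_sub_comm]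
              exact le_of_lt (hqnear i)
          _ = (∑ i, |((v i : ℤ) : ℝ)|) * ε := by rw [Finset.sum_mul]
          _ ≤ (B - 1) * ε := mul_le_mul_of_nonneg_right (hBv v hv) (le_of_lt hεpos)
      have hlt : (B - 1) * ε < u := by
        have h1 : (B - 1) * ε < B * ε :=
          mul_lt_mul_of_pos_right (by linarith) hεpos
        have h2 : B * ε = u := by
          rw [hε]; field_simp
        linarith
      have := hfv v hv
      have habs := abs_le.mp hest
      rw [hsplit]
      linarith [habs.1]
    have : (0:ℝ) < ((∑ i, ((v i : ℤ) : ℚ) * q i : ℚ) : ℝ) := by push_cast; exact hreal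
    exact_mod_cast this
  set D : ℕ := ∏ i, (q i).den with hD
  have hDpos : 0 < D := Finset.prod_pos (fun i _ => (q i).pos)
  have hz : ∀ i : Fin r, ∃ z : ℤ, (z : ℚ) = q i * (D : ℚ) :=
    fun i => exists_int_eq_mul (q i) (Finset.dvd_prod_of_mem _ (Finset.mem_univ i))
  choose φ hφ using hz
  refine ⟨φ, fun v hv hv0 => ?_⟩
  have hvT : v ∈ T := Finset.mem_filter.mpr ⟨hv, hv0⟩
  have hcast : (0:ℚ) < ((∑ i, φ i * v i : ℤ) : ℚ) := by
    push_cast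
    have heq : ∑ i, ((φ i : ℤ) : ℚ) * ((v i : ℤ) : ℚ)
        = (D : ℚ) * ∑ i, ((v i : ℤ) : ℚ) * q i := by
      rw [Finset.mul_sum]
      refine Finset.sum_congr rfl (fun i _ => ?_)
      rw [hφ i]; ring
    rw [heq]
    have hD' : (0:ℚ) < (D : ℚ) := by exact_mod_cast hDpos
    exact mul_pos hD' (hqv v hvT)
  exact_mod_cast hcast

/-- Given a primitive integral functional (with Bézout witness) positive on the nonzero
elements of `S`, there is a basis of the dual lattice consisting of functionals
nonnegative on `S`. -/
lemma exists_dual_basis {r : ℕ} (S : Finset (Fin r → ℤ)) (φ : Fin r → ℤ)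
    (hpos : ∀ v ∈ S, v ≠ 0 → 0 < ∑ i, φ i * v i)
    (c : Fin r → ℤ) (hc : ∑ i, c i * φ i = 1) :
    ∃ f : Basis (Fin r) ℤ (Module.Dual ℤ (Fin r → ℤ)), ∀ v ∈ S, ∀ i, 0 ≤ f i v := by
  classical
  set φL : Module.Dual ℤ (Fin r → ℤ) :=
    ∑ i, φ i • (LinearMap.proj i : (Fin r → ℤ) →ₗ[ℤ] ℤ) with hφL
  have hφLapp : ∀ v, φL v = ∑ i, φ i * v i := by
    intro v
    rw [hφL]
    simp [LinearMap.sum_apply, LinearMap.smul_apply, smul_eq_mul]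
  set ξ : Module.Dual ℤ (Module.Dual ℤ (Fin r → ℤ)) :=
    Module.Dual.eval ℤ (Fin r → ℤ) c with hξ
  have hξapp : ∀ ψ : Module.Dual ℤ (Fin r → ℤ), ξ ψ = ψ c := fun ψ => rfl
  have hξφ : ξ φL = 1 := by
    rw [hξapp, hφLapp]
    rw [← hc]
    exact Finset.sum_congr rfl (fun i _ => mul_comm _ _)
  set K : Submodule ℤ (Module.Dual ℤ (Fin r → ℤ)) := LinearMap.ker ξ with hK
  set stdB : Basis (Fin r) ℤ (Module.Dual ℤ (Fin r → ℤ)) :=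
    (Pi.basisFun ℤ (Fin r)).dualBasis with hstdB
  obtain ⟨n, bK⟩ := Submodule.basisOfPid stdB K
  have hξbK : ∀ j : Fin n, ξ (bK j : Module.Dual ℤ (Fin r → ℤ)) = 0 := fun j => (bK j).2
  set Nbig : ℤ := ∑ v ∈ S, ∑ j : Fin n, |(bK j : Module.Dual ℤ (Fin r → ℤ)) v| with hNbig
  have hNbig0 : 0 ≤ Nbig :=
    Finset.sum_nonneg fun v _ => Finset.sum_nonneg fun j _ => abs_nonneg _
  have hNbig_ge : ∀ v ∈ S, ∀ j : Fin n, |(bK j : Module.Dual ℤ (Fin r → ℤ)) v| ≤ Nbig := by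
    intro v hv j
    calc |(bK j : Module.Dual ℤ (Fin r → ℤ)) v|
        ≤ ∑ j' : Fin n, |(bK j' : Module.Dual ℤ (Fin r → ℤ)) v| :=
          Finset.single_le_sum
            (f := fun j' : Fin n => |(bK j' : Module.Dual ℤ (Fin r → ℤ)) v|)
            (fun j' _ => abs_nonneg _) (Finset.mem_univ j)
      _ ≤ Nbig := Finset.single_le_sum
          (f := fun w => ∑ j' : Fin n, |(bK j' : Module.Dual ℤ (Fin r → ℤ)) w|)
          (fun w _ => Finset.sum_nonneg fun j' _ => abs_nonneg _) hv
  have hφLv : ∀ v ∈ S, 0 ≤ φL v := by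
    intro v hv
    by_cases h : v = 0
    · subst h; rw [map_zero]
    · rw [hφLapp]; exact le_of_lt (hpos v hv h)
  have hφLv1 : ∀ v ∈ S, v ≠ 0 → 1 ≤ φL v := by
    intro v hv h
    rw [hφLapp]
    exact hpos v hv h
  set F : (Fin n ⊕ Unit) → Module.Dual ℤ (Fin r → ℤ) :=
    Sum.elim (fun j => (bK j : Module.Dual ℤ (Fin r → ℤ)) + Nbig • φL) (fun _ => φL) with hF
  -- linear independence of `F`
  have li : LinearIndependent ℤ F := by
    rw [Fintype.linearIndependent_iff]
    intro g hg
    rw [Fintype.sum_sum_type] at hg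
    simp only [hF, Sum.elim_inl, Sum.elim_inr, Finset.univ_unique, Finset.sum_singleton] at hg
    set a : ℤ := g (Sum.inr ()) with ha
    have hg' : (∑ j, g (Sum.inl j) • (bK j : Module.Dual ℤ (Fin r → ℤ)))
        + ((∑ j, g (Sum.inl j) * Nbig) + a) • φL = 0 := by
      rw [← hg]
      rw [add_smul, Finset.sum_smul]
      rw [← add_assoc, ← Finset.sum_add_distrib]
      congr 1
      refine Finset.sum_congr rfl (fun j _ => ?_)
      rw [smul_add, mul_smul]
    have hcoeff : (∑ j, g (Sum.inl j) * Nbig) + a = 0 := by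
      have := congrArg ξ hg'
      rw [map_add, map_sum, map_smul, hξφ, map_zero] at this
      simp only [map_smul, hξbK, smul_eq_mul, mul_zero, mul_one,
        Finset.sum_const_zero, zero_add] at this
      exact this
    have hbKsum : (∑ j, g (Sum.inl j) • (bK j : Module.Dual ℤ (Fin r → ℤ))) = 0 := by
      rw [hcoeff, zero_smul, add_zero] at hg'
      exact hg'
    have hinK : (∑ j, g (Sum.inl j) • bK j : K) = 0 := by
      apply Submodule.injective_subtype K
      rw [map_zero, map_sum]
      simp only [map_smul, Submodule.subtype_apply]
      exact hbKsum
    have hzero : ∀ j, g (Sum.inl j) = 0 := by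
      have := Fintype.linearIndependent_iff.mp bK.linearIndependent (fun j => g (Sum.inl j)) hinK
      exact this
    have ha0 : a = 0 := by
      have : (∑ j, g (Sum.inl j) * Nbig) = 0 := by
        refine Finset.sum_eq_zero (fun j _ => ?_)
        rw [hzero j, zero_mul]
      rw [this, zero_add] at hcoeff
      exact hcoeff
    intro i
    cases i with
    | inl j => exact hzero j
    | inr u => cases u; exact ha0
  -- `F` spans
  have hφLspan : φL ∈ Submodule.span ℤ (Set.range F) :=
    Submodule.subset_span ⟨Sum.inr (), rfl⟩
  have hbKspan : ∀ j, (bK j : Module.Dual ℤ (Fin r → ℤ)) ∈ Submodule.span ℤ (Set.range F) := by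
    intro j
    have h1 : F (Sum.inl j) ∈ Submodule.span ℤ (Set.range F) :=
      Submodule.subset_span ⟨Sum.inl j, rfl⟩
    have h2 := Submodule.sub_mem _ h1 (Submodule.smul_mem _ Nbig hφLspan)
    simpa [hF] using h2
  have sp : ⊤ ≤ Submodule.span ℤ (Set.range F) := by
    intro ψ _
    have hker : ψ - ξ ψ • φL ∈ K := by
      rw [hK, LinearMap.mem_ker, map_sub, map_smul, hξφ, smul_eq_mul, mul_one, sub_self]
    have hrepr := Basis.sum_repr bK ⟨ψ - ξ ψ • φL, hker⟩
    have hrepr' : (∑ j, bK.repr ⟨ψ - ξ ψ • φL, hker⟩ j • (bK j : Module.Dual ℤ (Fin r → ℤ)))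
        = ψ - ξ ψ • φL := by
      have h := congrArg K.subtype hrepr
      rw [map_sum] at h
      simp only [map_smul, Submodule.subtype_apply] at h
      exact h
    have : ψ = (∑ j, bK.repr ⟨ψ - ξ ψ • φL, hker⟩ j • (bK j : Module.Dual ℤ (Fin r → ℤ)))
        + ξ ψ • φL := by
      rw [hrepr', sub_add_cancel]
    rw [this]
    exact Submodule.add_mem _
      (Submodule.sum_mem _ fun j _ => Submodule.smul_mem _ _ (hbKspan j))
      (Submodule.smul_mem _ _ hφLspan)
  set bN : Basis (Fin n ⊕ Unit) ℤ (Module.Dual ℤ (Fin r → ℤ)) := Basis.mk li sp with hbN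
  have hcard : Fintype.card (Fin n ⊕ Unit) = r := by
    have h1 := Module.finrank_eq_card_basis bN
    have h2 := Module.finrank_eq_card_basis stdB
    rw [h2] at h1
    simpa using h1.symm
  set e : (Fin n ⊕ Unit) ≃ Fin r := Fintype.equivFinOfCardEq hcard with he
  refine ⟨bN.reindex e, ?_⟩
  intro v hv i
  rw [Basis.reindex_apply, hbN, Basis.coe_mk]
  rcases hsym : e.symm i with j | u
  · show 0 ≤ ((bK j : Module.Dual ℤ (Fin r → ℤ)) + Nbig • φL) v
    rw [LinearMap.add_apply, LinearMap.smul_apply, smul_eq_mul]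
    by_cases h : v = 0
    · subst h; rw [map_zero, map_zero, mul_zero, add_zero]
    · have h1 := hNbig_ge v hv j
      have h2 := hφLv1 v hv h
      have h3 : Nbig ≤ Nbig * φL v := le_mul_of_one_le_right hNbig0 h2
      have h4 : -(bK j : Module.Dual ℤ (Fin r → ℤ)) v ≤ |(bK j : Module.Dual ℤ (Fin r → ℤ)) v| :=
        neg_le_abs _
      linarith
  · show 0 ≤ φL v
    exact hφLv v hv

end Aux

/-- a positive normal affine monoid of rank r with gp(M) = ℤ^r sits inside
a unimodular simplicial cone: there is a free basis x₁,…,x_r of ℤ^r with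
ℝ₊M ⊆ ℝ₊x₁ + ⋯ + ℝ₊x_r. -/
theorem statement0 {r : ℕ} (M : AddSubmonoid (Fin r → ℤ))
    (hFG : M.FG) (hpos : IsPositiveMonoid M) (hnorm : IsNormalMonoid M)
    (hgp : gp M = ⊤) :
    ∃ b : Module.Basis (Fin r) ℤ (Fin r → ℤ),
      coneM M ⊆ (Submodule.span ℝ≥0 (Set.range fun j => toR (b j)) : Set (Fin r → ℝ)) := by
  classical
  obtain ⟨S, hS⟩ := hFG
  have hSM : ∀ v ∈ S, v ∈ M := fun v hv => hS ▸ AddSubmonoid.subset_closure hv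
  -- there is no nontrivial nonnegative integral relation among the generators
  have hrel : ∀ n : (Fin r → ℤ) → ℕ, ∑ v ∈ S, n v • v = 0 → ∀ v ∈ S, n v ≠ 0 → v = 0 := by
    intro n hsum v₀ hv₀ hn
    have hx : (n v₀) • v₀ ∈ M := nsmul_mem (hSM v₀ hv₀) _
    have hy : -((n v₀) • v₀) ∈ M := by
      have hsplit : (n v₀) • v₀ + ∑ v ∈ S.erase v₀, n v • v = 0 := by
        rw [Finset.add_sum_erase S (fun v => n v • v) hv₀]
        exact hsum
      have : ∑ v ∈ S.erase v₀, n v • v = -((n v₀) • v₀) :=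
        eq_neg_of_add_eq_zero_left (by rw [add_comm] at hsplit; exact hsplit)
      rw [← this]
      exact AddSubmonoid.sum_mem M
        (fun v hv => nsmul_mem (hSM v (Finset.mem_of_mem_erase hv)) _)
    have h0 : (n v₀) • v₀ = 0 := hpos _ hx hy
    funext j
    have hj := congrFun h0 j
    simp only [Pi.smul_apply, smul_eq_mul, nsmul_eq_mul, Pi.zero_apply] at hj
    rcases mul_eq_zero.mp hj with h | h
    · exact absurd (by exact_mod_cast h) hn
    · exact h
  by_cases hSz : ∀ v ∈ S, v = 0
  · -- trivial case : `M` consists of `0` only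
    refine ⟨Pi.basisFun ℤ (Fin r), ?_⟩
    have hM0 : ∀ m ∈ M, m = 0 := by
      intro m hm
      rw [← hS] at hm
      induction hm using AddSubmonoid.closure_induction with
      | mem x hx => exact hSz x hx
      | zero => rfl
      | add x y hx hy hx' hy' => rw [hx', hy', add_zero]
    have hle : Submodule.span ℝ≥0 (toR '' (M : Set (Fin r → ℤ))) ≤
        Submodule.span ℝ≥0 (Set.range fun j => toR (Pi.basisFun ℤ (Fin r) j)) := by
      rw [Submodule.span_le]
      rintro _ ⟨m, hm, rfl⟩
      have : m = 0 := hM0 m hm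
      subst this
      have : toR (0 : Fin r → ℤ) = 0 := by funext j; simp [toR]
      rw [this]
      exact Submodule.zero_mem _
    exact fun x hx => hle hx
  · push_neg at hSz
    obtain ⟨v₀, hv₀S, hv₀⟩ := hSz
    obtain ⟨φ, hφ⟩ := exists_pos_functional S hrel
    have hφne : φ ≠ 0 := by
      intro h
      have := hφ v₀ hv₀S hv₀
      rw [h] at this
      simp at this
    -- make `φ` primitive, with a Bézout certificate
    set I : Ideal ℤ := Ideal.span (Set.range φ) with hI
    set g : ℤ := Submodule.IsPrincipal.generator I with hg
    have hgdvd : ∀ i, g ∣ φ i := fun i =>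
      (Submodule.IsPrincipal.mem_iff_generator_dvd I).mp
        (Ideal.subset_span (Set.mem_range_self i))
    obtain ⟨c, hcg⟩ : ∃ c : Fin r → ℤ, ∑ i, c i * φ i = g :=
      Ideal.mem_span_range_iff_exists_fun.mp (Submodule.IsPrincipal.generator_mem I)
    have hg0 : g ≠ 0 := by
      intro h
      apply hφne
      funext i
      exact zero_dvd_iff.mp (h ▸ hgdvd i)
    choose e he using hgdvd
    have hbez : ∑ i, c i * e i = 1 := by
      have hmul : g * (∑ i, c i * e i) = g * 1 := by
        rw [mul_one, Finset.mul_sum]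
        conv_rhs => rw [← hcg]
        refine Finset.sum_congr rfl (fun i _ => ?_)
        rw [he i]; ring
      exact mul_left_cancel₀ hg0 hmul
    have hge : ∀ v : Fin r → ℤ, ∑ i, φ i * v i = g * ∑ i, e i * v i := by
      intro v
      rw [Finset.mul_sum]
      refine Finset.sum_congr rfl (fun i _ => ?_)
      rw [he i]; ring
    -- sign-corrected primitive functional
    obtain ⟨e₁, c₁, hbez1, hpos1⟩ :
        ∃ (e₁ c₁ : Fin r → ℤ), (∑ i, c₁ i * e₁ i = 1) ∧
          ∀ v ∈ S, v ≠ 0 → 0 < ∑ i, e₁ i * v i := by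
      rcases hg0.lt_or_gt with hgneg | hgpos
      · refine ⟨fun i => -(e i), fun i => -(c i), ?_, ?_⟩
        · rw [← hbez]
          refine Finset.sum_congr rfl (fun i _ => ?_); ring
        · intro v hv hvz
          have hp := hφ v hv hvz
          rw [hge v] at hp
          have hneg : ∑ i, e i * v i < 0 := by
            rcases mul_pos_iff.mp hp with ⟨h1, _⟩ | ⟨_, h2⟩
            · exact absurd h1 (not_lt.mpr (le_of_lt hgneg))
            · exact h2
          have : ∑ i, (fun i => -(e i)) i * v i = -(∑ i, e i * v i) := by
            rw [← Finset.sum_neg_distrib]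
            refine Finset.sum_congr rfl (fun i _ => ?_); ring
          rw [this]
          linarith
      · refine ⟨e, c, hbez, ?_⟩
        intro v hv hvz
        have hp := hφ v hv hvz
        rw [hge v] at hp
        rcases mul_pos_iff.mp hp with ⟨_, h2⟩ | ⟨h1, _⟩
        · exact h2
        · exact absurd h1 (not_lt.mpr (le_of_lt hgpos))
    obtain ⟨f, hf⟩ := exists_dual_basis S e₁ hpos1 c₁ hbez1
    -- all functionals `f i` are nonnegative on `M`
    have hfM : ∀ m ∈ M, ∀ i, 0 ≤ f i m := by
      intro m hm
      rw [← hS] at hm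
      induction hm using AddSubmonoid.closure_induction with
      | mem x hx => exact hf x hx
      | zero => intro i; rw [map_zero]
      | add x y hx hy hx' hy' =>
          intro i
          rw [map_add]
          exact add_nonneg (hx' i) (hy' i)
    -- the dual basis of `f`
    set b : Module.Basis (Fin r) ℤ (Fin r → ℤ) :=
      (f.dualBasis).map (Module.evalEquiv ℤ (Fin r → ℤ)).symm with hb
    have hdelta : ∀ i j, f i (b j) = if i = j then 1 else 0 := by
      intro i j
      rw [hb, Module.Basis.map_apply, Module.apply_evalEquiv_symm_apply,
        Module.Basis.dualBasis_apply_self]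
    have hcoord : ∀ m : Fin r → ℤ, ∀ i, f i m = b.repr m i := by
      intro m i
      conv_lhs => rw [← b.sum_repr m]
      rw [map_sum]
      have : ∀ j, f i (b.repr m j • b j) = if i = j then b.repr m j else 0 := by
        intro j
        rw [map_smul, smul_eq_mul, hdelta i j, mul_ite, mul_one, mul_zero]
      rw [Finset.sum_congr rfl (fun j _ => this j), Finset.sum_ite_eq,
        if_pos (Finset.mem_univ i)]
    refine ⟨b, ?_⟩
    have hle : Submodule.span ℝ≥0 (toR '' (M : Set (Fin r → ℤ))) ≤
        Submodule.span ℝ≥0 (Set.range fun j => toR (b j)) := by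
      rw [Submodule.span_le]
      rintro _ ⟨m, hm, rfl⟩
      have hnn : ∀ i, 0 ≤ b.repr m i := fun i => by
        rw [← hcoord m i]; exact hfM m hm i
      have hexp : toR m = ∑ i, (((b.repr m i).toNat : ℝ≥0)) • toR (b i) := by
        funext j
        rw [Finset.sum_apply]
        have hm' := congrFun (b.sum_repr m) j
        rw [Finset.sum_apply] at hm'
        simp only [Pi.smul_apply, smul_eq_mul] at hm'
        show ((m j : ℤ) : ℝ) = _
        rw [← hm']
        push_cast
        refine Finset.sum_congr rfl (fun i _ => ?_)
        have h1 : (((b.repr m i).toNat : ℝ≥0) • toR (b i)) j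
            = (((b.repr m i).toNat : ℕ) : ℝ) * ((b i j : ℤ) : ℝ) := by
          rw [Pi.smul_apply, NNReal.smul_def, smul_eq_mul]
          norm_num [toR]
        rw [h1]
        have h2 : (((b.repr m i).toNat : ℕ) : ℝ) = ((b.repr m i : ℤ) : ℝ) := by
          exact_mod_cast congrArg (fun z : ℤ => (z : ℝ)) (Int.toNat_of_nonneg (hnn i))
        rw [h2]
      rw [hexp]
      exact Submodule.sum_mem _ fun i _ => Submodule.smul_mem _ _
        (Submodule.subset_span ⟨i, rfl⟩)
    exact fun x hx => hle hx
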